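/- Let Δ = {∅, {p}} be the complex consisting of a single point, and let Σ^k Δ denote the k-fold suspension of Δ. Then for all k ≥ 0, the complex Σ^k Δ is k-convex union representable but not (k−1)-convex union representable. -/

import Mathlib

open Set

/-- An abstract simplicial complex on ground set `V`: a collection of finite
subsets of `V` that is closed under inclusion. -/
def IsSimplicialComplex {V : Type*} (Δ : Set (Finset V)) : Prop :=
  ∀ σ ∈ Δ, ∀ τ : Finset V, τ ⊆ σ → τ ∈ Δ

/-- The nerve of a collection of sets `U i`: the faces are the finite sets `σ`
of indices such that `⋂ i ∈ σ, U i ≠ ∅`, where by convention the empty face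
belongs to the nerve iff some `U i` is nonempty. -/
def nerveOf {V E : Type*} (U : V → Set E) : Set (Finset V) :=
  {σ | (∃ i, (U i).Nonempty) ∧ ∃ x, ∀ i ∈ σ, x ∈ U i}

/-- A facet of `Δ` is an inclusion-maximal face. -/
def IsFacet {V : Type*} (Δ : Set (Finset V)) (σ : Finset V) : Prop :=
  σ ∈ Δ ∧ ∀ τ ∈ Δ, σ ⊆ τ → τ = σ

/-- A free face of `Δ`: a face that is not a facet and is contained in a
unique facet. -/
def IsFreeFace {V : Type*} (Δ : Set (Finset V)) (σ : Finset V) : Prop :=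
  σ ∈ Δ ∧ ¬ IsFacet Δ σ ∧ ∃! τ : Finset V, IsFacet Δ τ ∧ σ ⊆ τ

/-- An elementary collapse removes from `Δ` all faces containing a free face. -/
def ElemCollapse {V : Type*} (Δ Γ : Set (Finset V)) : Prop :=
  ∃ σ : Finset V, IsFreeFace Δ σ ∧ Γ = {τ ∈ Δ | ¬ σ ⊆ τ}

/-- `Δ` collapses onto `Γ` if a (finite) sequence of elementary collapses
leads from `Δ` to `Γ`. -/
def CollapsesTo {V : Type*} (Δ Γ : Set (Finset V)) : Prop :=
  Relation.ReflTransGen ElemCollapse Δ Γ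

/-- `Δ` is collapsible if it collapses onto the void complex. -/
def Collapsible {V : Type*} (Δ : Set (Finset V)) : Prop :=
  CollapsesTo Δ (∅ : Set (Finset V))

/-- Euclidean space `ℝ^d`. -/
abbrev Euc (d : ℕ) : Type := EuclideanSpace ℝ (Fin d)

/-- `U` is a `d`-convex union representation of `Δ`: the `U i` are convex open
sets in `ℝ^d`, their union is convex, and their nerve is `Δ`. -/
def IsCURep {V : Type*} {d : ℕ} (U : V → Set (Euc d)) (Δ : Set (Finset V)) : Prop :=
  (∀ i, Convex ℝ (U i)) ∧ (∀ i, IsOpen (U i)) ∧ Convex ℝ (⋃ i, U i) ∧ nerveOf U = Δ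

/-- `Δ` is `d`-convex union representable. -/
def IsCUR {V : Type*} (d : ℕ) (Δ : Set (Finset V)) : Prop :=
  ∃ U : V → Set (Euc d), IsCURep U Δ

/-- `Δ` is convex union representable: `d`-convex union representable for some `d`. -/
def ConvexUnionRepresentable {V : Type*} (Δ : Set (Finset V)) : Prop :=
  ∃ d : ℕ, IsCUR d Δ

/-- `Δ` is `d`-representable: the nerve of a family of convex sets in `ℝ^d`. -/
def IsRep {V : Type*} (d : ℕ) (Δ : Set (Finset V)) : Prop :=
  ∃ U : V → Set (Euc d), (∀ i, Convex ℝ (U i)) ∧ nerveOf U = Δ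

/-- The suspension of `Δ`: the join of `Δ` with the `0`-dimensional sphere on
two new vertices. -/
def suspension {V : Type*} [DecidableEq V] (Δ : Set (Finset V)) :
    Set (Finset (V ⊕ Fin 2)) :=
  {σ | ∃ τ ∈ Δ, ∃ s : Finset (Fin 2), s.card ≤ 1 ∧
    σ = τ.image Sum.inl ∪ s.image Sum.inr}

/-- Ground set for the `k`-fold suspension of a point. -/
def GroundT : ℕ → Type
  | 0 => Unit
  | k + 1 => GroundT k ⊕ Fin 2

instance instDecEqGroundT : (k : ℕ) → DecidableEq (GroundT k)
  | 0 => inferInstanceAs (DecidableEq Unit)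
  | k + 1 =>
    haveI := instDecEqGroundT k
    inferInstanceAs (DecidableEq (GroundT k ⊕ Fin 2))

/-- The `k`-fold suspension `Σ^k Δ` of the complex `Δ = {∅, {p}}`
consisting of a single point. -/
def suspIterPoint : (k : ℕ) → Set (Finset (GroundT k))
  | 0 => {σ : Finset Unit | σ ⊆ {()}}
  | k + 1 => suspension (suspIterPoint k)



def gpair : (k : ℕ) → Fin k × Fin 2 → GroundT k
  | _+1, (i, j) =>
    if h : (i : ℕ) < _ then Sum.inl (gpair _ (⟨i, h⟩, j)) else Sum.inr j

lemma gpair_succ_lt (k : ℕ) (i : Fin (k+1)) (j : Fin 2) (hi : (i : ℕ) < k) :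
    gpair (k+1) (i, j) = (Sum.inl (gpair k (⟨i, hi⟩, j)) : GroundT k ⊕ Fin 2) :=
  dif_pos hi

lemma gpair_succ_ge (k : ℕ) (i : Fin (k+1)) (j : Fin 2) (hi : ¬ (i : ℕ) < k) :
    gpair (k+1) (i, j) = (Sum.inr j : GroundT k ⊕ Fin 2) :=
  dif_neg hi

lemma gpair_inj : ∀ (k : ℕ) (p q : Fin k × Fin 2), gpair k p = gpair k q → p = q := by
  intro k
  induction k with
  | zero => exact fun p => p.1.elim0
  | succ k ih =>
    rintro ⟨i, j⟩ ⟨i', j'⟩ h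
    by_cases hi : (i : ℕ) < k <;> by_cases hi' : (i' : ℕ) < k <;>
      simp only [gpair_succ_lt, gpair_succ_ge, hi, hi', not_false_iff] at h
    · have h2 := ih _ _ (Sum.inl.inj h)
      have hv : (i : ℕ) = (i' : ℕ) := congrArg (fun p => ((p.1 : Fin k) : ℕ)) h2
      have hj : j = j' := congrArg Prod.snd h2
      exact Prod.ext (Fin.ext hv) hj
    · exact absurd h Sum.inl_ne_inr
    · exact absurd h Sum.inr_ne_inl
    · have hj := Sum.inr.inj h
      have : (i : ℕ) = (i' : ℕ) := by omega
      exact Prod.ext (Fin.ext this) hj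

lemma mem_suspIterPoint : ∀ (k : ℕ) (σ : Finset (GroundT k)),
    σ ∈ suspIterPoint k ↔
      ∀ i : Fin k, ¬ (gpair k (i, 0) ∈ σ ∧ gpair k (i, 1) ∈ σ) := by
  intro k
  induction k with
  | zero =>
    intro σ
    constructor
    · intro _ i; exact i.elim0
    · intro _
      show σ ⊆ {()}
      intro a _; exact Finset.mem_singleton.2 rfl
  | succ k ih =>
    intro σ
    constructor
    · rintro ⟨τ, hτ, s, hs, rfl⟩ i ⟨h0, h1⟩
      by_cases hi : (i : ℕ) < k
      · rw [gpair_succ_lt k i 0 hi] at h0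
        rw [gpair_succ_lt k i 1 hi] at h1
        have h0' : gpair k (⟨i, hi⟩, 0) ∈ τ := by
          rcases Finset.mem_union.1 h0 with h | h
          · rcases Finset.mem_image.1 h with ⟨a, ha, hae⟩
            exact (Sum.inl.inj hae) ▸ ha
          · rcases Finset.mem_image.1 h with ⟨a, _, hae⟩
            exact absurd hae Sum.inr_ne_inl
        have h1' : gpair k (⟨i, hi⟩, 1) ∈ τ := by
          rcases Finset.mem_union.1 h1 with h | h
          · rcases Finset.mem_image.1 h with ⟨a, ha, hae⟩
            exact (Sum.inl.inj hae) ▸ ha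
          · rcases Finset.mem_image.1 h with ⟨a, _, hae⟩
            exact absurd hae Sum.inr_ne_inl
        exact (ih τ).1 hτ ⟨i, hi⟩ ⟨h0', h1'⟩
      · rw [gpair_succ_ge k i 0 hi] at h0
        rw [gpair_succ_ge k i 1 hi] at h1
        have h0' : (0 : Fin 2) ∈ s := by
          rcases Finset.mem_union.1 h0 with h | h
          · rcases Finset.mem_image.1 h with ⟨a, _, hae⟩
            exact absurd hae Sum.inl_ne_inr
          · rcases Finset.mem_image.1 h with ⟨a, ha, hae⟩
            exact (Sum.inr.inj hae) ▸ ha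
        have h1' : (1 : Fin 2) ∈ s := by
          rcases Finset.mem_union.1 h1 with h | h
          · rcases Finset.mem_image.1 h with ⟨a, _, hae⟩
            exact absurd hae Sum.inl_ne_inr
          · rcases Finset.mem_image.1 h with ⟨a, ha, hae⟩
            exact (Sum.inr.inj hae) ▸ ha
        have : ({0, 1} : Finset (Fin 2)) ⊆ s := by
          intro a ha
          rcases Finset.mem_insert.1 ha with rfl | ha
          · exact h0'
          · exact (Finset.mem_singleton.1 ha) ▸ h1'
        have := Finset.card_le_card this
        simp at this
        omega
    · intro h
      classical
      refine ⟨σ.preimage Sum.inl Sum.inl_injective.injOn,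
        ?_, σ.preimage Sum.inr Sum.inr_injective.injOn, ?_, ?_⟩
      · rw [ih]
        rintro i ⟨h0, h1⟩
        replace h0 := Finset.mem_preimage.1 h0
        replace h1 := Finset.mem_preimage.1 h1
        have key : ∀ j : Fin 2, gpair (k+1) (i.castSucc, j) = Sum.inl (gpair k (i, j)) := by
          intro j
          have hi : ((i.castSucc : Fin (k+1)) : ℕ) < k := i.isLt
          rw [gpair_succ_lt k _ j hi]
          have he : (⟨((i.castSucc : Fin (k+1)) : ℕ), hi⟩ : Fin k) = i := Fin.ext rfl
          rw [he]
        exact h i.castSucc ⟨(key 0) ▸ h0, (key 1) ▸ h1⟩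
      · rw [Finset.card_le_one]
        intro a ha b hb
        replace ha := Finset.mem_preimage.1 ha
        replace hb := Finset.mem_preimage.1 hb
        have hlast : ¬ ((Fin.last k : Fin (k+1)) : ℕ) < k := by simp
        have hh := h (Fin.last k)
        rw [gpair_succ_ge k _ 0 hlast, gpair_succ_ge k _ 1 hlast] at hh
        by_contra hab
        have : a = 0 ∧ b = 1 ∨ a = 1 ∧ b = 0 := by omega
        rcases this with ⟨rfl, rfl⟩ | ⟨rfl, rfl⟩
        · exact hh ⟨ha, hb⟩
        · exact hh ⟨hb, ha⟩
      · ext a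
        rcases a with a | a <;>
          refine Iff.trans ?_ (Finset.mem_union.trans (or_congr Finset.mem_image Finset.mem_image)).symm <;>
          constructor
        · intro ha; exact Or.inl ⟨a, Finset.mem_preimage.2 ha, rfl⟩
        · rintro (⟨b, hb, he⟩ | ⟨b, hb, he⟩)
          · exact (Sum.inl.inj he) ▸ Finset.mem_preimage.1 hb
          · exact absurd he (by simp)
        · intro ha; exact Or.inr ⟨a, Finset.mem_preimage.2 ha, rfl⟩
        · rintro (⟨b, hb, he⟩ | ⟨b, hb, he⟩)
          · exact absurd he (by simp)
          · exact (Sum.inr.inj he) ▸ Finset.mem_preimage.1 hb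

lemma exists_rep : ∀ k, ∃ U : GroundT k → Set (Euc k),
    (∀ i, Convex ℝ (U i)) ∧ (∀ i, IsOpen (U i)) ∧ (⋃ i, U i) = univ ∧
    nerveOf U = suspIterPoint k := by
  intro k
  induction k with
  | zero =>
    refine ⟨fun _ => univ, fun _ => convex_univ, fun _ => isOpen_univ, eq_univ_of_forall (fun x => mem_iUnion.2 ⟨(), mem_univ x⟩), ?_⟩
    ext σ
    constructor
    · intro _
      show σ ⊆ {()}
      intro a _; exact Finset.mem_singleton.2 rfl
    · intro _
      exact ⟨⟨(), univ_nonempty⟩, ⟨0, fun _ _ => mem_univ _⟩⟩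
  | succ k ih =>
    obtain ⟨U, hconv, hopen, hunion, hnerve⟩ := ih
    set L : Euc (k+1) → Euc k := fun x => WithLp.toLp 2 (fun i => x i.castSucc) with hL
    have hLlin : IsLinearMap ℝ L := ⟨fun a b => rfl, fun c a => rfl⟩
    have hLcont : Continuous L := (PiLp.continuous_toLp _ _).comp (continuous_pi fun i => PiLp.continuous_apply _ _ _)
    have hlastlin : IsLinearMap ℝ (fun x : Euc (k+1) => x (Fin.last k)) :=
      ⟨fun a b => rfl, fun c a => rfl⟩
    have hlastcont : Continuous (fun x : Euc (k+1) => x (Fin.last k)) :=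
      PiLp.continuous_apply _ _ _
    refine ⟨Sum.elim (fun v => L ⁻¹' (U v))
      (fun j => {x : Euc (k+1) | if j = 0 then x (Fin.last k) < 0 else 0 < x (Fin.last k)}),
      ?_, ?_, ?_, ?_⟩
    · rintro (v | j)
      · exact (hconv v).is_linear_preimage hLlin
      · by_cases hj : j = 0
        · show Convex ℝ {x : Euc (k+1) | if j = 0 then x (Fin.last k) < 0 else 0 < x (Fin.last k)}
          simp only [if_pos hj]
          exact convex_halfSpace_lt hlastlin 0
        · show Convex ℝ {x : Euc (k+1) | if j = 0 then x (Fin.last k) < 0 else 0 < x (Fin.last k)}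
          simp only [if_neg hj]
          exact convex_halfSpace_gt hlastlin 0
    · rintro (v | j)
      · exact (hopen v).preimage hLcont
      · by_cases hj : j = 0
        · show IsOpen {x : Euc (k+1) | if j = 0 then x (Fin.last k) < 0 else 0 < x (Fin.last k)}
          simp only [if_pos hj]
          exact isOpen_lt hlastcont continuous_const
        · show IsOpen {x : Euc (k+1) | if j = 0 then x (Fin.last k) < 0 else 0 < x (Fin.last k)}
          simp only [if_neg hj]
          exact isOpen_lt continuous_const hlastcont
    · ext x
      simp only [mem_iUnion, mem_univ, iff_true]
      have : L x ∈ ⋃ v, U v := by rw [hunion]; exact mem_univ _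
      obtain ⟨v, hv⟩ := mem_iUnion.1 this
      exact mem_iUnion.2 ⟨Sum.inl v, hv⟩
    · show nerveOf _ = suspension (suspIterPoint k)
      rw [← hnerve]
      ext σ
      constructor
      · rintro ⟨-, x, hx⟩
        classical
        refine ⟨σ.preimage Sum.inl Sum.inl_injective.injOn, ?_,
          σ.preimage Sum.inr Sum.inr_injective.injOn, ?_, ?_⟩
        · refine ⟨?_, L x, fun v hv => hx (Sum.inl v) (Finset.mem_preimage.1 hv)⟩
          have : (0 : Euc k) ∈ ⋃ v, U v := by rw [hunion]; exact mem_univ _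
          obtain ⟨v, hv⟩ := mem_iUnion.1 this
          exact ⟨v, ⟨_, hv⟩⟩
        · rw [Finset.card_le_one]
          intro a ha b hb
          rw [Finset.mem_preimage] at ha hb
          by_contra hab
          have hab' : (0 : Fin 2) ∈ σ.preimage Sum.inr Sum.inr_injective.injOn ∧
              (1 : Fin 2) ∈ σ.preimage Sum.inr Sum.inr_injective.injOn := by
            rw [Finset.mem_preimage, Finset.mem_preimage]
            have : a = 0 ∧ b = 1 ∨ a = 1 ∧ b = 0 := by omega
            rcases this with ⟨rfl, rfl⟩ | ⟨rfl, rfl⟩ <;> exact ⟨by assumption, by assumption⟩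
          have h0 := hx (Sum.inr 0) (Finset.mem_preimage.1 hab'.1)
          have h1 := hx (Sum.inr 1) (Finset.mem_preimage.1 hab'.2)
          simp at h0 h1
          linarith
        · ext a
          rcases a with a | a <;>
            rw [Finset.mem_union, Finset.mem_image, Finset.mem_image] <;>
            constructor
          · intro ha; exact Or.inl ⟨a, Finset.mem_preimage.2 ha, rfl⟩
          · rintro (⟨b, hb, he⟩ | ⟨b, hb, he⟩)
            · exact (Sum.inl.inj he) ▸ Finset.mem_preimage.1 hb
            · exact absurd he (by simp)
          · intro ha; exact Or.inr ⟨a, Finset.mem_preimage.2 ha, rfl⟩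
          · rintro (⟨b, hb, he⟩ | ⟨b, hb, he⟩)
            · exact absurd he (by simp)
            · exact (Sum.inr.inj he) ▸ Finset.mem_preimage.1 hb
      · rintro ⟨τ, ⟨-, x, hx⟩, s, hs, rfl⟩
        classical
        set t : ℝ := if (0 : Fin 2) ∈ s then (-1 : ℝ) else 1 with ht
        set y : Euc (k+1) := WithLp.toLp 2 (Fin.snoc (WithLp.ofLp x) t) with hy
        have hLy : L y = x := by
          ext i
          show (Fin.snoc (WithLp.ofLp x) t : Fin (k+1) → ℝ) i.castSucc = x i
          simp [Fin.snoc_castSucc]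
        have hylast : y (Fin.last k) = t := by show (Fin.snoc (WithLp.ofLp x) t : Fin (k+1) → ℝ) (Fin.last k) = t; simp
        refine ⟨⟨Sum.inr 1, ?_⟩, y, ?_⟩
        · refine ⟨WithLp.toLp 2 (fun _ => (1:ℝ) : Fin (k+1) → ℝ), ?_⟩
          simp only [Sum.elim_inr, if_neg (by decide : (1 : Fin 2) ≠ 0), mem_setOf_eq]
          norm_num
        · rintro (v | j) hv
          · have hvτ : v ∈ τ := by
              rcases Finset.mem_union.1 hv with h | h
              · rcases Finset.mem_image.1 h with ⟨b, hb, he⟩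
                exact (Sum.inl.inj he) ▸ hb
              · rcases Finset.mem_image.1 h with ⟨b, hb, he⟩
                exact absurd he (by simp)
            show y ∈ L ⁻¹' (U v)
            rw [mem_preimage, hLy]
            exact hx v hvτ
          · have hjs : j ∈ s := by
              rcases Finset.mem_union.1 hv with h | h
              · rcases Finset.mem_image.1 h with ⟨b, hb, he⟩
                exact absurd he (by simp)
              · rcases Finset.mem_image.1 h with ⟨b, hb, he⟩
                exact (Sum.inr.inj he) ▸ hb
            by_cases hj : j = 0
            · subst hj
              simp only [Sum.elim_inr, if_pos rfl, mem_setOf_eq, hylast, ht]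
              rw [if_pos hjs]
              norm_num
            · simp only [Sum.elim_inr, if_neg hj, mem_setOf_eq, hylast, ht]
              have h0 : (0 : Fin 2) ∉ s := by
                intro h0
                have hj1 : j = 1 := by omega
                have : ({0, 1} : Finset (Fin 2)) ⊆ s := by
                  intro a ha
                  rcases Finset.mem_insert.1 ha with rfl | ha
                  · exact h0
                  · exact (Finset.mem_singleton.1 ha) ▸ (hj1 ▸ hjs)
                have := Finset.card_le_card this
                simp at this
                omega
              rw [if_neg h0]
              norm_num

section
variable {j : ℕ} (U : GroundT (j+1) → Set (Euc j))

lemma lower_bound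
    (hconv : ∀ i, Convex ℝ (U i)) (hopen : ∀ i, IsOpen (U i))
    (hnerve : ∀ σ : Finset (GroundT (j+1)), σ ∈ nerveOf U ↔
      ∀ i : Fin (j+1), ¬ (gpair (j+1) (i, 0) ∈ σ ∧ gpair (j+1) (i, 1) ∈ σ)) :
    False := by
  classical
  -- nonemptiness of each vertex set of a pair
  have hsingle : ∀ (p : Fin (j+1) × Fin 2), (U (gpair (j+1) p)).Nonempty := by
    rintro ⟨i, e⟩
    have hmem : ({gpair (j+1) (i, e)} : Finset (GroundT (j+1))) ∈ nerveOf U := by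
      rw [hnerve]
      rintro i' ⟨h0, h1⟩
      rw [Finset.mem_singleton] at h0 h1
      have := gpair_inj (j+1) _ _ (h0.trans h1.symm)
      have : (0 : Fin 2) = 1 := congrArg Prod.snd this
      exact absurd this (by decide)
    obtain ⟨-, x, hx⟩ := hmem
    exact ⟨x, hx _ (Finset.mem_singleton.2 rfl)⟩
  -- disjointness within a pair
  have hdisj : ∀ i : Fin (j+1), Disjoint (U (gpair (j+1) (i, 0))) (U (gpair (j+1) (i, 1))) := by
    intro i
    rw [Set.disjoint_left]
    intro x h0 h1
    have hmem : ({gpair (j+1) (i, 0), gpair (j+1) (i, 1)} : Finset (GroundT (j+1))) ∈ nerveOf U := by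
      refine ⟨⟨_, ⟨x, h0⟩⟩, x, ?_⟩
      intro v hv
      rcases Finset.mem_insert.1 hv with rfl | hv
      · exact h0
      · exact (Finset.mem_singleton.1 hv) ▸ h1
    rw [hnerve] at hmem
    exact hmem i ⟨Finset.mem_insert_self _ _,
      Finset.mem_insert_of_mem (Finset.mem_singleton_self _)⟩
  -- separating hyperplanes
  have hsep : ∀ i : Fin (j+1), ∃ (f : Euc j →L[ℝ] ℝ) (c : ℝ),
      (∀ p ∈ U (gpair (j+1) (i, 0)), f p < c) ∧ ∀ p ∈ U (gpair (j+1) (i, 1)), c ≤ f p :=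
    fun i => geometric_hahn_banach_open (hconv _) (hopen _) (hconv _) (hdisj i)
  choose f c hfA hfB using hsep
  -- linear dependence of the functionals
  have hdep : ¬ LinearIndependent ℝ (fun i : Fin (j+1) => (f i : Euc j →ₗ[ℝ] ℝ)) := by
    intro hli
    have hcard := hli.fintype_card_le_finrank
    rw [Fintype.card_fin] at hcard
    have : Module.finrank ℝ (Euc j →ₗ[ℝ] ℝ) = j := by
      rw [Module.finrank_linearMap, finrank_euclideanSpace_fin, Module.finrank_self, mul_one]
    omega
  rw [Fintype.not_linearIndependent_iff] at hdep
  obtain ⟨lam, hlam, i₀, hi₀⟩ := hdep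
  have hsum : ∀ x : Euc j, ∑ i, lam i * f i x = 0 := by
    intro x
    have := LinearMap.congr_fun hlam x
    simpa [LinearMap.sum_apply, LinearMap.smul_apply, smul_eq_mul] using this
  -- transversal points
  have htrans : ∀ ε : Fin (j+1) → Fin 2, ∃ x : Euc j, ∀ i, x ∈ U (gpair (j+1) (i, ε i)) := by
    intro ε
    have hmem : (Finset.univ.image (fun i => gpair (j+1) (i, ε i))) ∈ nerveOf U := by
      rw [hnerve]
      rintro i ⟨h0, h1⟩
      rcases Finset.mem_image.1 h0 with ⟨i1, -, he1⟩
      rcases Finset.mem_image.1 h1 with ⟨i2, -, he2⟩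
      have e1 := gpair_inj (j+1) _ _ he1
      have e2 := gpair_inj (j+1) _ _ he2
      have : ε i1 = 0 := congrArg Prod.snd e1
      have h1' : i1 = i := congrArg Prod.fst e1
      have : ε i2 = 1 := congrArg Prod.snd e2
      have h2' : i2 = i := congrArg Prod.fst e2
      subst h1'; subst h2'
      simp_all
    obtain ⟨-, x, hx⟩ := hmem
    exact ⟨x, fun i => hx _ (Finset.mem_image.2 ⟨i, Finset.mem_univ _, rfl⟩)⟩
  set K := ∑ i, lam i * c i with hK
  obtain ⟨x1, hx1⟩ := htrans (fun i => if lam i < 0 then 0 else 1)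
  obtain ⟨x2, hx2⟩ := htrans (fun i => if 0 < lam i then 0 else 1)
  have ht1 : ∀ i : Fin (j+1), 0 ≤ lam i * (f i x1 - c i) := by
    intro i
    by_cases h : lam i < 0
    · have hx := hx1 i
      rw [if_pos h] at hx
      have := hfA i _ hx
      nlinarith
    · have hx := hx1 i
      rw [if_neg h] at hx
      have := hfB i _ hx
      push_neg at h
      nlinarith
  have ht2 : ∀ i : Fin (j+1), lam i * (f i x2 - c i) ≤ 0 := by
    intro i
    by_cases h : 0 < lam i
    · have hx := hx2 i
      rw [if_pos h] at hx
      have := hfA i _ hx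
      nlinarith
    · have hx := hx2 i
      rw [if_neg h] at hx
      have := hfB i _ hx
      push_neg at h
      nlinarith
  have hsum1 : ∑ i, lam i * (f i x1 - c i) = -K := by
    simp only [mul_sub, Finset.sum_sub_distrib, hsum x1, hK, zero_sub]
  have hsum2 : ∑ i, lam i * (f i x2 - c i) = -K := by
    simp only [mul_sub, Finset.sum_sub_distrib, hsum x2, hK, zero_sub]
  have hKle : -K ≤ 0 := hsum2 ▸ Finset.sum_nonpos (fun i _ => ht2 i)
  have hKge : 0 ≤ -K := hsum1 ▸ Finset.sum_nonneg (fun i _ => ht1 i)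
  have hK0 : K = 0 := by linarith
  rcases lt_or_gt_of_ne hi₀ with hneg | hpos
  · have : 0 < ∑ i, lam i * (f i x1 - c i) := by
      refine Finset.sum_pos' (fun i _ => ht1 i) ⟨i₀, Finset.mem_univ _, ?_⟩
      have hx := hx1 i₀
      rw [if_pos hneg] at hx
      have := hfA i₀ _ hx
      nlinarith
    rw [hsum1, hK0] at this
    linarith
  · have : 0 < ∑ i, -(lam i * (f i x2 - c i)) := by
      refine Finset.sum_pos' (fun i _ => neg_nonneg.2 (ht2 i)) ⟨i₀, Finset.mem_univ _, ?_⟩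
      have hx := hx2 i₀
      rw [if_pos hpos] at hx
      have := hfA i₀ _ hx
      nlinarith
    rw [Finset.sum_neg_distrib, hsum2, hK0] at this
    linarith

end

/-- **Corollary.** For all `k ≥ 0`, the `k`-fold suspension of a point is
`k`-convex union representable but not `(k-1)`-convex union representable. -/
theorem suspIterPoint_CUR (k : ℕ) :
    IsCUR k (suspIterPoint k) ∧
      ∀ j : ℕ, k = j + 1 → ¬ IsCUR j (suspIterPoint k) := by
  constructor
  · obtain ⟨U, h1, h2, h3, h4⟩ := exists_rep k
    exact ⟨U, h1, h2, by rw [h3]; exact convex_univ, h4⟩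
  · rintro j rfl
    rintro ⟨U, hconv, hopen, -, hnerve⟩
    exact lower_bound U hconv hopen
      (fun σ => by rw [hnerve]; exact mem_suspIterPoint _ σ)
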